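/- Let A be a local ring with maximal ideal m and commutative residue field k. Let p ∈ A[x] be monic with p = p₁p₂ = q₂q₁, where p₁, p₂, q₁, q₂ ∈ A[x] are monic and the reductions satisfy p̄₁ = q̄₁ = f₁ and p̄₂ = q̄₂ = f₂ for relatively prime monic polynomials f₁, f₂ ∈ k[x]. Then A[x]p₂ + A[x]q₁ = A[x], A[x]p₂ ∩ A[x]q₁ = A[x]p, and consequently the left A[x]-module A[x]/A[x]p is isomorphic to A[x]/A[x]p₂ ⊕ A[x]/A[x]q₁. -/

import Mathlib

open Polynomial MulOpposite


lemma jset_add {B : Type*} [Ring B] {x z : B}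
    (hx : ∀ y, IsUnit (1 - y * x)) (hz : ∀ y, IsUnit (1 - y * z)) :
    ∀ y : B, IsUnit (1 - y * (x + z)) := by
  intro y
  obtain ⟨u, hu⟩ := hx y
  have h1 : (1 - y * x) * (↑u⁻¹ : B) = 1 := by rw [← hu]; exact_mod_cast u.mul_inv
  have key : 1 - y * (x + z) = (1 - y * x) * (1 - ((↑u⁻¹ : B) * y) * z) := by
    have expand : (1 - y * x) * (1 - ((↑u⁻¹ : B) * y) * z)
        = (1 - y * x) - ((1 - y * x) * (↑u⁻¹ : B)) * (y * z) := by noncomm_ring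
    rw [expand, h1]; noncomm_ring
  rw [key]
  exact (hu ▸ u.isUnit).mul (hz _)

section Mat
variable {A : Type*} [Ring A] {K : Type*} [Field K]

lemma isUnit_one_sub_matrix (π : A →+* K) (hπker : ∀ a : A, π a = 0 ↔ ¬ IsUnit a)
    {n : ℕ} (E : Matrix (Fin n) (Fin n) A) (hE : ∀ i j, π (E i j) = 0) :
    IsUnit (1 - E) := by
  have base : ∀ (i j : Fin n) (a : A), π a = 0 →
      ∀ y : Matrix (Fin n) (Fin n) A, IsUnit (1 - y * Matrix.single i j a) := by
    intro i j a ha y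
    set u : Fin n → A := fun k => y k i * a with hu
    have hcu : π (u j) = 0 := by simp [hu, ha]
    have hunit : IsUnit (1 - u j) := by
      have : ¬ π (1 - u j) = 0 := by simp [map_sub, hcu]
      rw [hπker] at this; exact not_not.mp this
    obtain ⟨u0, hu0⟩ := hunit
    have hw1 : (1 - u j) * (↑u0⁻¹ : A) = 1 := by rw [← hu0]; exact_mod_cast u0.mul_inv
    have hw2 : (↑u0⁻¹ : A) * (1 - u j) = 1 := by rw [← hu0]; exact_mod_cast u0.inv_mul
    set w : A := (↑u0⁻¹ : A) with hwdef
    set V : Matrix (Fin n) (Fin n) A := Matrix.of (fun k l => if l = j then u k else 0) with hV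
    set D : A → Matrix (Fin n) (Fin n) A := fun z => Matrix.diagonal (fun _ => z) with hD
    have hyV : y * Matrix.single i j a = V := by
      ext k l
      simp only [Matrix.mul_apply, Matrix.single, Matrix.of_apply, hV, hu]
      simp only [ite_and, Finset.sum_ite_eq, Finset.mem_univ, if_true]
      rcases eq_or_ne l j with rfl | hlj
      · simp
      · simp [hlj, Ne.symm hlj]
    have hVD : ∀ z, V * D z = Matrix.of (fun k l => if l = j then u k * z else 0) := by
      intro z
      ext k l
      simp [hD, Matrix.mul_diagonal, hV, ite_mul]
    have hVV : V * V = V * D (u j) := by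
      ext k l
      rw [hVD]
      simp only [Matrix.mul_apply, hV, Matrix.of_apply, ite_mul, zero_mul, mul_ite, mul_zero]
      simp [Finset.sum_ite_eq]
    have hWV : V * D w * V = V * D (w * u j) := by
      rw [hVD, hVD]
      ext k l
      simp only [Matrix.mul_apply, hV, Matrix.of_apply, ite_mul, zero_mul, mul_ite, mul_zero,
        Matrix.of_apply]
      simp [Finset.sum_ite_eq, mul_assoc]
    have hDmul : ∀ z z', D z * D z' = D (z * z') := by
      intro z z'; simp [hD, Matrix.diagonal_mul_diagonal]
    have hD1 : D 1 = 1 := by simp [hD]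
    have hD0 : D 0 = 0 := by simp [hD]
    have hDsub : ∀ z z', D z - D z' = D (z - z') := by
      intro z z'; simp [hD, Matrix.diagonal_sub]
    have left : (1 - V) * (1 + V * D w) = 1 := by
      have e1 : (1 - V) * (1 + V * D w) = 1 + V * D w - V * D 1 - V * V * D w := by
        rw [hD1]; noncomm_ring
      rw [e1, hVV, Matrix.mul_assoc V (D (u j)) (D w), hDmul]
      have e2 : V * D w - V * D 1 - V * D (u j * w) = V * D (w - 1 - u j * w) := by
        rw [← hDsub, ← hDsub, ← Matrix.mul_sub, ← Matrix.mul_sub]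
      have e3 : w - 1 - u j * w = 0 := by
        have : (1 - u j) * w = w - u j * w := by noncomm_ring
        rw [this] at hw1; rw [← hw1]; noncomm_ring
      have e4 : 1 + V * D w - V * D 1 - V * D (u j * w)
          = 1 + (V * D w - V * D 1 - V * D (u j * w)) := by noncomm_ring
      rw [e4, e2, e3, hD0, Matrix.mul_zero, add_zero]
    have right : (1 + V * D w) * (1 - V) = 1 := by
      have e1 : (1 + V * D w) * (1 - V) = 1 + V * D w - V * D 1 - V * D w * V := by
        rw [hD1]; noncomm_ring
      rw [e1, hWV]
      have e2 : V * D w - V * D 1 - V * D (w * u j) = V * D (w - 1 - w * u j) := by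
        rw [← hDsub, ← hDsub, ← Matrix.mul_sub, ← Matrix.mul_sub]
      have e3 : w - 1 - w * u j = 0 := by
        have : w * (1 - u j) = w - w * u j := by noncomm_ring
        rw [this] at hw2; rw [← hw2]; noncomm_ring
      have e4 : 1 + V * D w - V * D 1 - V * D (w * u j)
          = 1 + (V * D w - V * D 1 - V * D (w * u j)) := by noncomm_ring
      rw [e4, e2, e3, hD0, Matrix.mul_zero, add_zero]
    rw [hyV]
    exact ⟨⟨1 - V, 1 + V * D w, left, right⟩, rfl⟩
  have main : ∀ y : Matrix (Fin n) (Fin n) A,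
      IsUnit (1 - y * (∑ i : Fin n, ∑ j : Fin n, Matrix.single i j (E i j))) := by
    apply Finset.sum_induction _ (fun M => ∀ y, IsUnit (1 - y * M))
      (fun a b ha hb => jset_add ha hb) (fun y => by simp)
    intro i _
    apply Finset.sum_induction _ (fun M => ∀ y, IsUnit (1 - y * M))
      (fun a b ha hb => jset_add ha hb) (fun y => by simp)
    intro j _
    exact base i j (E i j) (hE i j)
  have := main 1
  rwa [← Matrix.matrix_eq_sum_single E, one_mul] at this

lemma isUnit_of_map_matrix (π : A →+* K) (hπsurj : Function.Surjective π)
    (hπker : ∀ a : A, π a = 0 ↔ ¬ IsUnit a)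
    {n : ℕ} (M : Matrix (Fin n) (Fin n) A) (h : IsUnit (M.map π)) : IsUnit M := by
  obtain ⟨v, hv⟩ := h
  set N : Matrix (Fin n) (Fin n) A :=
    Matrix.of (fun i j => (hπsurj ((↑v⁻¹ : Matrix (Fin n) (Fin n) K) i j)).choose) with hN
  have hNmap : N.map π = (↑v⁻¹ : Matrix (Fin n) (Fin n) K) := by
    ext i j; exact (hπsurj _).choose_spec
  have hMN : ∀ i j, π ((1 - M * N) i j) = 0 := by
    intro i j
    have : (M * N).map π = 1 := by
      rw [Matrix.map_mul, hNmap, ← hv]; exact v.mul_inv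
    have h2 : π ((M * N) i j) = (1 : Matrix (Fin n) (Fin n) K) i j := by
      rw [← this]; rfl
    rw [Matrix.sub_apply, map_sub, h2, Matrix.one_apply, Matrix.one_apply]
    split_ifs <;> simp
  have hNM : ∀ i j, π ((1 - N * M) i j) = 0 := by
    intro i j
    have : (N * M).map π = 1 := by
      rw [Matrix.map_mul, hNmap, ← hv]; exact v.inv_mul
    have h2 : π ((N * M) i j) = (1 : Matrix (Fin n) (Fin n) K) i j := by
      rw [← this]; rfl
    rw [Matrix.sub_apply, map_sub, h2, Matrix.one_apply, Matrix.one_apply]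
    split_ifs <;> simp
  have hu1 : IsUnit (M * N) := by
    have := isUnit_one_sub_matrix π hπker _ hMN
    simpa using this
  have hu2 : IsUnit (N * M) := by
    have := isUnit_one_sub_matrix π hπker _ hNM
    simpa using this
  obtain ⟨a1, ha1⟩ := hu1
  obtain ⟨a2, ha2⟩ := hu2
  have h1 : M * (N * (Units.val a1⁻¹)) = 1 := by
    rw [← Matrix.mul_assoc, ← ha1]; exact a1.mul_inv
  have h2 : ((Units.val a2⁻¹) * N) * M = 1 := by
    rw [Matrix.mul_assoc, ← ha2]; exact a2.inv_mul
  have heq : (Units.val a2⁻¹) * N = N * (Units.val a1⁻¹) := by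
    calc (Units.val a2⁻¹) * N
        = ((Units.val a2⁻¹) * N) * (M * (N * (Units.val a1⁻¹))) := by
          rw [h1, Matrix.mul_one]
      _ = (((Units.val a2⁻¹) * N) * M) * (N * (Units.val a1⁻¹)) := by
          simp only [Matrix.mul_assoc]
      _ = N * (Units.val a1⁻¹) := by rw [h2, Matrix.one_mul]
  exact ⟨⟨M, N * (Units.val a1⁻¹), h1, heq ▸ h2⟩, rfl⟩

end Mat
section RD
variable {R : Type*} [Ring R]

lemma degree_opRingEquiv_op (s : R[X]) :
    (Polynomial.opRingEquiv R (op s)).degree = s.degree := by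
  unfold Polynomial.degree
  rw [support_opRingEquiv, unop_op]

lemma right_divMod [Nontrivial R] {q : R[X]} (hq : q.Monic) (t : R[X]) :
    ∃ w r : R[X], t = w * q + r ∧ r.degree < q.degree := by
  let e := Polynomial.opRingEquiv R
  have hQ : (e (op q)).Monic := by
    unfold Monic
    rw [show e (op q) = Polynomial.opRingEquiv R (op q) from rfl, leadingCoeff_opRingEquiv,
      unop_op, hq.leadingCoeff, op_one]
  have hdiv := modByMonic_add_div (e (op t)) (e (op q))
  refine ⟨unop (e.symm (e (op t) /ₘ e (op q))), unop (e.symm (e (op t) %ₘ e (op q))), ?_, ?_⟩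
  · have h2 := congrArg (fun z => unop (e.symm z)) hdiv
    simp only [map_add, map_mul, RingEquiv.symm_apply_apply, unop_add, unop_mul, unop_op] at h2
    rw [add_comm] at h2; exact h2.symm
  · have hlt := degree_modByMonic_lt (e (op t)) hQ
    rw [show e (op t) %ₘ e (op q)
        = e (op (unop (e.symm (e (op t) %ₘ e (op q))))) by simp,
      degree_opRingEquiv_op, degree_opRingEquiv_op] at hlt
    exact hlt
end RD

section Bridge
variable {R : Type*} [Ring R]

noncomputable def gpoly (P Q : R[X]) (n₁ : ℕ) (i : ℕ) : R[X] :=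
  if i < n₁ then X ^ i * P else X ^ (i - n₁) * Q

noncomputable def matOf (P Q : R[X]) (n₁ n₂ : ℕ) : Matrix (Fin (n₁+n₂)) (Fin (n₁+n₂)) R :=
  Matrix.of fun i j => (gpoly P Q n₁ (i : ℕ)).coeff (j : ℕ)

lemma degree_sum_lt {ι : Type*} (s : Finset ι) (f : ι → R[X]) {n : ℕ}
    (h : ∀ i ∈ s, (f i).degree < (n : WithBot ℕ)) :
    (∑ i ∈ s, f i).degree < (n : WithBot ℕ) :=
  lt_of_le_of_lt (degree_sum_le s f) ((Finset.sup_lt_iff (WithBot.bot_lt_coe n)).mpr h)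

lemma gpoly_degree_lt [Nontrivial R] {P Q : R[X]} {n₁ n₂ : ℕ} (hP : P.Monic) (hQ : Q.Monic)
    (hPd : P.natDegree = n₂) (hQd : Q.natDegree = n₁) (i : ℕ) (hi : i < n₁ + n₂) :
    (gpoly P Q n₁ i).degree < ((n₁ + n₂ : ℕ) : WithBot ℕ) := by
  unfold gpoly
  split_ifs with h
  · have hm : (X ^ i * P).Monic := (monic_X_pow i).mul hP
    have hnd : (X ^ i * P).natDegree = i + n₂ := by
      rw [(monic_X_pow i).natDegree_mul hP, natDegree_X_pow, hPd]
    rw [degree_eq_natDegree hm.ne_zero, hnd]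
    exact_mod_cast (by omega : i + n₂ < n₁ + n₂)
  · have hm : (X ^ (i - n₁) * Q).Monic := (monic_X_pow _).mul hQ
    have hnd : (X ^ (i - n₁) * Q).natDegree = (i - n₁) + n₁ := by
      rw [(monic_X_pow _).natDegree_mul hQ, natDegree_X_pow, hQd]
    rw [degree_eq_natDegree hm.ne_zero, hnd]
    exact_mod_cast (by omega : (i - n₁) + n₁ < n₁ + n₂)

lemma poly_as_sum {s : R[X]} {n : ℕ} (hs : s.degree < (n : WithBot ℕ)) :
    ∑ i ∈ Finset.range n, C (s.coeff i) * X ^ i = s := by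
  by_cases h0 : s = 0
  · simp [h0]
  · have hlt : s.natDegree < n := by
      rwa [← natDegree_lt_iff_degree_lt h0] at hs
    conv_rhs => rw [s.as_sum_range' n hlt]
    exact Finset.sum_congr rfl fun i _ => C_mul_X_pow_eq_monomial

lemma vecMul_matOf {P Q : R[X]} (n₁ n₂ : ℕ) (c : Fin (n₁+n₂) → R) (j : Fin (n₁+n₂)) :
    ((matOf P Q n₁ n₂).vecMul c) j
      = (∑ i : Fin (n₁+n₂), C (c i) * gpoly P Q n₁ (i : ℕ)).coeff (j : ℕ) := by
  rw [finset_sum_coeff]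
  simp [Matrix.vecMul, dotProduct, matOf, coeff_C_mul]

lemma matOf_sum_eq {P Q : R[X]} {n₁ n₂ : ℕ} (hP : P.Monic) (hQ : Q.Monic)
    (hPd : P.natDegree = n₂) (hQd : Q.natDegree = n₁)
    (s t : R[X]) (hs : s.degree < (n₁ : WithBot ℕ)) (ht : t.degree < (n₂ : WithBot ℕ)) :
    ∑ i : Fin (n₁+n₂), C (if (i : ℕ) < n₁ then s.coeff (i : ℕ) else t.coeff ((i : ℕ) - n₁))
        * gpoly P Q n₁ (i : ℕ)
      = s * P + t * Q := by
  rw [Fin.sum_univ_eq_sum_range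
    (fun i => C (if i < n₁ then s.coeff i else t.coeff (i - n₁)) * gpoly P Q n₁ i) (n₁+n₂)]
  rw [← Finset.sum_range_add_sum_Ico _ (Nat.le_add_right n₁ n₂)]
  have h1 : ∀ i ∈ Finset.range n₁,
      C (if i < n₁ then s.coeff i else t.coeff (i - n₁)) * gpoly P Q n₁ i
        = (C (s.coeff i) * X ^ i) * P := by
    intro i hi
    rw [Finset.mem_range] at hi
    rw [if_pos hi]
    unfold gpoly
    rw [if_pos hi, mul_assoc]
  have h2 : ∀ i ∈ Finset.Ico n₁ (n₁+n₂),
      C (if i < n₁ then s.coeff i else t.coeff (i - n₁)) * gpoly P Q n₁ i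
        = (C (t.coeff (i - n₁)) * X ^ (i - n₁)) * Q := by
    intro i hi
    rw [Finset.mem_Ico] at hi
    rw [if_neg (by omega)]
    unfold gpoly
    rw [if_neg (by omega), mul_assoc]
  rw [Finset.sum_congr rfl h1, Finset.sum_congr rfl h2, ← Finset.sum_mul, ← Finset.sum_mul,
    poly_as_sum hs]
  congr 1
  rw [Finset.sum_Ico_eq_sum_range]
  simp only [add_tsub_cancel_left]
  congr 1
  exact poly_as_sum ht

lemma poly_eq_zero_of_coeffs {P' : R[X]} {n : ℕ} (h : P'.degree < (n : WithBot ℕ))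
    (hc : ∀ j : Fin n, P'.coeff (j : ℕ) = 0) : P' = 0 := by
  ext m
  by_cases hm : m < n
  · simpa using hc ⟨m, hm⟩
  · simp [coeff_eq_zero_of_degree_lt (h.trans_le (by exact_mod_cast Nat.le_of_not_lt hm))]

lemma gpoly_map {S : Type*} [Ring S] (π : R →+* S) (P Q : R[X]) (n₁ : ℕ) (i : ℕ) :
    (gpoly P Q n₁ i).map π = gpoly (P.map π) (Q.map π) n₁ i := by
  unfold gpoly
  split_ifs <;> simp [Polynomial.map_mul]

lemma matOf_map {S : Type*} [Ring S] (π : R →+* S) (P Q : R[X]) (n₁ n₂ : ℕ) :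
    (matOf P Q n₁ n₂).map π = matOf (P.map π) (Q.map π) n₁ n₂ := by
  ext i j
  simp [matOf, Matrix.map_apply, ← gpoly_map π P Q n₁, coeff_map]

end Bridge

section KSide
variable {K : Type*} [Field K]

lemma exists_rep {f₁ f₂ : K[X]} {n₁ n₂ : ℕ} (hf₁ : f₁.Monic) (hf₂ : f₂.Monic)
    (hcop : IsCoprime f₁ f₂) (hd₁ : f₁.natDegree = n₁) (hd₂ : f₂.natDegree = n₂)
    (r : K[X]) (hr : r.degree < ((n₁ + n₂ : ℕ) : WithBot ℕ)) :
    ∃ s t : K[X], s.degree < (n₁ : WithBot ℕ) ∧ t.degree < (n₂ : WithBot ℕ) ∧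
      s * f₂ + t * f₁ = r := by
  obtain ⟨a, b, hab⟩ := hcop
  have hmod := modByMonic_add_div (r * a) f₂
  set t : K[X] := (r * a) %ₘ f₂ with htdef
  set u : K[X] := (r * a) /ₘ f₂ with hudef
  set s : K[X] := r * b + u * f₁ with hsdef
  have hdf₂ : f₂.degree = (n₂ : WithBot ℕ) := by
    rw [degree_eq_natDegree hf₂.ne_zero, hd₂]
  have hdf₁ : f₁.degree = (n₁ : WithBot ℕ) := by
    rw [degree_eq_natDegree hf₁.ne_zero, hd₁]
  have ht : t.degree < (n₂ : WithBot ℕ) := by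
    rw [← hdf₂]; exact degree_modByMonic_lt (r * a) hf₂
  have key : s * f₂ + t * f₁ = r := by
    have htu : t = r * a - f₂ * u := by rw [← hmod]; ring
    rw [hsdef, htu]
    calc (r * b + u * f₁) * f₂ + (r * a - f₂ * u) * f₁ = r * (a * f₁ + b * f₂) := by ring
      _ = r := by rw [hab, mul_one]
  refine ⟨s, t, ?_, ht, key⟩
  by_cases h0 : s = 0
  · rw [h0, degree_zero]; exact WithBot.bot_lt_coe _
  · have hsf : s * f₂ = r - t * f₁ := by rw [← key]; ring
    have h2 : (s * f₂).degree < ((n₁ + n₂ : ℕ) : WithBot ℕ) := by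
      rw [hsf]
      apply lt_of_le_of_lt (degree_sub_le _ _)
      rw [max_lt_iff]
      refine ⟨hr, ?_⟩
      rw [degree_mul, hdf₁]
      calc t.degree + (n₁ : WithBot ℕ) < (n₂ : WithBot ℕ) + (n₁ : WithBot ℕ) :=
            WithBot.add_lt_add_right (by exact_mod_cast WithBot.coe_ne_bot) ht
        _ = ((n₁ + n₂ : ℕ) : WithBot ℕ) := by
            rw [← Nat.cast_add, Nat.add_comm]
    rw [degree_mul, hdf₂, degree_eq_natDegree h0] at h2
    rw [degree_eq_natDegree h0]
    have : s.natDegree + n₂ < n₁ + n₂ := by exact_mod_cast h2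
    exact_mod_cast (by omega : s.natDegree < n₁)
end KSide

section KU
variable {K : Type*} [Field K]

lemma isUnit_matOf {f₁ f₂ : K[X]} {n₁ n₂ : ℕ} (hf₁ : f₁.Monic) (hf₂ : f₂.Monic)
    (hcop : IsCoprime f₁ f₂) (hd₁ : f₁.natDegree = n₁) (hd₂ : f₂.natDegree = n₂) :
    IsUnit (matOf f₂ f₁ n₁ n₂) := by
  rw [← Matrix.vecMul_surjective_iff_isUnit]
  intro d
  set r : K[X] := ∑ j : Fin (n₁+n₂), (monomial (j : ℕ)) (d j) with hrdef
  have hr : r.degree < ((n₁ + n₂ : ℕ) : WithBot ℕ) := by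
    apply degree_sum_lt
    intro i _
    exact lt_of_le_of_lt (degree_monomial_le _ _) (by exact_mod_cast i.2)
  have hrc : ∀ j : Fin (n₁+n₂), r.coeff (j : ℕ) = d j := by
    intro j
    rw [hrdef, finset_sum_coeff]
    simp only [coeff_monomial, Fin.val_eq_val]
    simp
  obtain ⟨s, t, hs, ht, hst⟩ := exists_rep hf₁ hf₂ hcop hd₁ hd₂ r hr
  refine ⟨fun i => if (i : ℕ) < n₁ then s.coeff (i : ℕ) else t.coeff ((i : ℕ) - n₁), funext fun j => ?_⟩
  beta_reduce
  rw [vecMul_matOf, matOf_sum_eq hf₂ hf₁ hd₂ hd₁ s t hs ht, hst]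
  exact hrc j

end KU

lemma degree_C_mul_le' {R : Type*} [Semiring R] (a : R) (g : R[X]) :
    (Polynomial.C a * g).degree ≤ g.degree :=
  (degree_mul_le _ _).trans
    (by simpa using add_le_add_left (degree_C_le (a := a)) g.degree)

theorem quotient_splits_of_two_sided_factorization
    {A : Type*} [Ring A] {K : Type*} [Field K]
    (π : A →+* K) (hπsurj : Function.Surjective π)
    (hπker : ∀ a : A, π a = 0 ↔ ¬ IsUnit a)
    (p p₁ p₂ q₁ q₂ : A[X]) (f₁ f₂ : K[X])
    (hpmonic : p.Monic) (hp₁ : p₁.Monic) (hp₂ : p₂.Monic) (hq₁ : q₁.Monic) (hq₂ : q₂.Monic)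
    (hf₁ : f₁.Monic) (hf₂ : f₂.Monic) (hcop : IsCoprime f₁ f₂)
    (hfact₁ : p = p₁ * p₂) (hfact₂ : p = q₂ * q₁)
    (hred₁ : p₁.map π = f₁) (hredq₁ : q₁.map π = f₁)
    (hred₂ : p₂.map π = f₂) (hredq₂ : q₂.map π = f₂) :
    Ideal.span {p₂} ⊔ Ideal.span {q₁} = (⊤ : Ideal A[X]) ∧
    Ideal.span {p₂} ⊓ Ideal.span {q₁} = (Ideal.span {p} : Ideal A[X]) ∧
    Nonempty ((A[X] ⧸ (Ideal.span {p} : Ideal A[X])) ≃ₗ[A[X]]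
      (A[X] ⧸ (Ideal.span {p₂} : Ideal A[X])) × (A[X] ⧸ (Ideal.span {q₁} : Ideal A[X]))) := by
  haveI : Nontrivial A :=
    ⟨⟨1, 0, fun h => one_ne_zero (α := K) (by rw [← map_one π, h, map_zero])⟩⟩
  set n₁ := q₁.natDegree with hn₁
  set n₂ := p₂.natDegree with hn₂
  have hdf₁n : f₁.natDegree = n₁ := by rw [← hredq₁, hq₁.natDegree_map]
  have hdp₁ : p₁.natDegree = n₁ := by
    have := hp₁.natDegree_map π
    rw [hred₁] at this; rw [← this, hdf₁n]
  have hdf₂n : f₂.natDegree = n₂ := by rw [← hred₂, hp₂.natDegree_map]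
  have hdq₂ : q₂.natDegree = n₂ := by
    have := hq₂.natDegree_map π
    rw [hredq₂] at this; rw [← this, hdf₂n]
  -- the key matrix over A is invertible
  have hMk : (matOf p₂ q₁ n₁ n₂).map π = matOf f₂ f₁ n₁ n₂ := by
    rw [matOf_map, hred₂, hredq₁]
  have hM : IsUnit (matOf p₂ q₁ n₁ n₂) :=
    isUnit_of_map_matrix π hπsurj hπker _
      (hMk ▸ isUnit_matOf hf₁ hf₂ hcop hdf₁n hdf₂n)
  obtain ⟨U, hU⟩ := hM
  have hinj : ∀ c : Fin (n₁+n₂) → A,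
      Matrix.vecMul c (matOf p₂ q₁ n₁ n₂) = 0 → c = 0 := by
    intro c hc
    have h2 := congrArg (fun v => Matrix.vecMul v (Units.val U⁻¹)) hc
    simp only [Matrix.vecMul_vecMul, Matrix.zero_vecMul] at h2
    rwa [← hU, Units.mul_inv, Matrix.vecMul_one] at h2
  -- the sup
  have hsup : Ideal.span {p₂} ⊔ Ideal.span {q₁} = (⊤ : Ideal A[X]) := by
    rcases Nat.eq_zero_or_pos (n₁ + n₂) with hn0 | hnpos
    · have h2 : p₂ = 1 := hp₂.natDegree_eq_zero.mp (by omega)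
      rw [h2, Ideal.span_singleton_one]
      simp
    · set e0 : Fin (n₁+n₂) → A := fun j => if (j : ℕ) = 0 then 1 else 0 with he0
      set c : Fin (n₁+n₂) → A := Matrix.vecMul e0 (Units.val U⁻¹) with hcdef
      have hc : Matrix.vecMul c (matOf p₂ q₁ n₁ n₂) = e0 := by
        rw [hcdef, Matrix.vecMul_vecMul, ← hU, Units.inv_mul, Matrix.vecMul_one]
      set Pc : A[X] := ∑ i : Fin (n₁+n₂), C (c i) * gpoly p₂ q₁ n₁ (i : ℕ) with hPcdef
      have hdegPc : Pc.degree < ((n₁+n₂ : ℕ) : WithBot ℕ) := by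
        apply degree_sum_lt
        intro i _
        exact lt_of_le_of_lt (degree_C_mul_le' _ _)
          (gpoly_degree_lt hp₂ hq₁ rfl rfl (i : ℕ) i.2)
      have hPc1 : Pc = 1 := by
        ext m
        by_cases hm : m < n₁ + n₂
        · have h3 := congrFun hc ⟨m, hm⟩
          rw [vecMul_matOf, ← hPcdef] at h3
          rw [h3]
          simp [he0, coeff_one]
        · rw [coeff_eq_zero_of_degree_lt
            (hdegPc.trans_le (by exact_mod_cast Nat.le_of_not_lt hm)), coeff_one]
          have : m ≠ 0 := by omega
          simp [this]
      have hmem : Pc ∈ Ideal.span {p₂} ⊔ Ideal.span {q₁} := by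
        apply Submodule.sum_mem
        intro i _
        by_cases hi : (i : ℕ) < n₁
        · apply Submodule.mem_sup_left
          apply Submodule.mem_span_singleton.mpr
          refine ⟨C (c i) * X ^ (i : ℕ), ?_⟩
          rw [smul_eq_mul, mul_assoc]
          unfold gpoly
          rw [if_pos hi]
        · apply Submodule.mem_sup_right
          apply Submodule.mem_span_singleton.mpr
          refine ⟨C (c i) * X ^ ((i : ℕ) - n₁), ?_⟩
          rw [smul_eq_mul, mul_assoc]
          unfold gpoly
          rw [if_neg hi]
      exact (Ideal.eq_top_iff_one _).mpr (hPc1 ▸ hmem)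
  -- the inf
  have hinf : Ideal.span {p₂} ⊓ Ideal.span {q₁} = (Ideal.span {p} : Ideal A[X]) := by
    apply le_antisymm
    · intro r hr
      obtain ⟨hr2, hr1⟩ := Submodule.mem_inf.mp hr
      obtain ⟨s, hs⟩ := Submodule.mem_span_singleton.mp hr2
      obtain ⟨t, htq⟩ := Submodule.mem_span_singleton.mp hr1
      rw [smul_eq_mul] at hs htq
      obtain ⟨w, t', hdiv, hdeg⟩ := right_divMod hq₂ t
      have hdegq₂ : q₂.degree = (n₂ : WithBot ℕ) := by
        rw [degree_eq_natDegree hq₂.ne_zero, hdq₂]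
      set s' : A[X] := s - w * p₁ with hs'def
      have hkey : s' * p₂ = t' * q₁ := by
        have h1 : s * p₂ = t * q₁ := by rw [hs, htq]
        have h2 : (w * q₂) * q₁ = (w * p₁) * p₂ := by
          rw [mul_assoc, ← hfact₂, hfact₁, ← mul_assoc]
        calc s' * p₂ = s * p₂ - (w * p₁) * p₂ := by rw [hs'def]; noncomm_ring
          _ = t * q₁ - (w * q₂) * q₁ := by rw [h1, h2]
          _ = t' * q₁ := by rw [hdiv]; noncomm_ring
      have hdegt' : t'.degree < (n₂ : WithBot ℕ) := hdegq₂ ▸ hdeg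
      have hdegs' : s'.degree < (n₁ : WithBot ℕ) := by
        by_cases h0 : s' = 0
        · rw [h0, degree_zero]; exact WithBot.bot_lt_coe _
        by_cases ht0 : t' = 0
        · exfalso
          have hz : s' * p₂ = 0 := by rw [hkey, ht0, zero_mul]
          have hl := leadingCoeff_mul_monic hp₂ (p := s')
          rw [hz, leadingCoeff_zero] at hl
          exact h0 (leadingCoeff_eq_zero.mp hl.symm)
        have hlc : s'.leadingCoeff * p₂.leadingCoeff ≠ 0 := by
          rw [hp₂.leadingCoeff, mul_one]
          exact leadingCoeff_ne_zero.mpr h0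
        have e1 : (s' * p₂).natDegree = s'.natDegree + n₂ := by
          rw [natDegree_mul' hlc]
        have e2 : (t' * q₁).natDegree ≤ t'.natDegree + n₁ := natDegree_mul_le
        have e3 : t'.natDegree < n₂ := by
          rwa [natDegree_lt_iff_degree_lt ht0]
        have e4 : s'.natDegree + n₂ ≤ t'.natDegree + n₁ := by
          rw [← e1, hkey]; exact e2
        rw [degree_eq_natDegree h0]
        exact_mod_cast (by omega : s'.natDegree < n₁)
      have hzero : s' * p₂ + (-t') * q₁ = 0 := by
        rw [neg_mul, ← hkey, add_neg_cancel]
      set c : Fin (n₁+n₂) → A :=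
        fun i => if (i : ℕ) < n₁ then s'.coeff (i : ℕ) else (-t').coeff ((i : ℕ) - n₁) with hcdef
      have hcv : Matrix.vecMul c (matOf p₂ q₁ n₁ n₂) = 0 := by
        funext j
        rw [vecMul_matOf, hcdef,
          matOf_sum_eq hp₂ hq₁ rfl rfl s' (-t') hdegs' (by rwa [degree_neg]), hzero]
        simp
      have hc0 := hinj c hcv
      have hs'0 : s' = 0 := by
        apply poly_eq_zero_of_coeffs hdegs'
        intro j
        have h5 : c ⟨(j : ℕ), by omega⟩ = 0 := by rw [hc0]; rfl
        rw [hcdef] at h5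
        simpa [j.2] using h5
      have hrw : r = w * p := by
        calc r = s * p₂ := hs.symm
          _ = (s' + w * p₁) * p₂ := by rw [hs'def]; noncomm_ring
          _ = w * (p₁ * p₂) := by rw [hs'0]; noncomm_ring
          _ = w * p := by rw [← hfact₁]
      exact Submodule.mem_span_singleton.mpr ⟨w, by rw [smul_eq_mul, ← hrw]⟩
    · rw [le_inf_iff]
      constructor
      · rw [Ideal.span_le, Set.singleton_subset_iff]
        exact Submodule.mem_span_singleton.mpr ⟨p₁, by rw [smul_eq_mul, ← hfact₁]⟩
      · rw [Ideal.span_le, Set.singleton_subset_iff]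
        exact Submodule.mem_span_singleton.mpr ⟨q₂, by rw [smul_eq_mul, ← hfact₂]⟩
  refine ⟨hsup, hinf, ?_⟩
  -- Chinese remainder
  set f : A[X] →ₗ[A[X]] (A[X] ⧸ (Ideal.span {p₂} : Ideal A[X]))
      × (A[X] ⧸ (Ideal.span {q₁} : Ideal A[X])) :=
    LinearMap.prod (Ideal.span {p₂} : Ideal A[X]).mkQ (Ideal.span {q₁} : Ideal A[X]).mkQ
    with hfdef
  have hker : LinearMap.ker f = (Ideal.span {p} : Ideal A[X]) := by
    rw [hfdef, LinearMap.ker_prod, Submodule.ker_mkQ, Submodule.ker_mkQ, hinf]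
  have hfsurj : Function.Surjective f := by
    intro z
    obtain ⟨x, hx⟩ := Submodule.mkQ_surjective _ z.1
    obtain ⟨y, hy⟩ := Submodule.mkQ_surjective _ z.2
    have hxy : x - y ∈ Ideal.span {p₂} ⊔ Ideal.span {q₁} := by rw [hsup]; trivial
    obtain ⟨u, hu, v, hv, huv⟩ := Submodule.mem_sup.mp hxy
    refine ⟨x - u, ?_⟩
    have hv' : v = x - y - u := by rw [← huv]; abel
    have hxu : x - u = y + v := by rw [hv']; abel
    have hu0 : (Ideal.span {p₂} : Ideal A[X]).mkQ u = 0 := by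
      rwa [Submodule.mkQ_apply, Submodule.Quotient.mk_eq_zero]
    have hv0 : (Ideal.span {q₁} : Ideal A[X]).mkQ v = 0 := by
      rwa [Submodule.mkQ_apply, Submodule.Quotient.mk_eq_zero]
    have hz1 : (Ideal.span {p₂} : Ideal A[X]).mkQ (x - u) = z.1 := by
      rw [map_sub, hx, hu0, sub_zero]
    have hz2 : (Ideal.span {q₁} : Ideal A[X]).mkQ (x - u) = z.2 := by
      rw [hxu, map_add, hy, hv0, add_zero]
    rw [hfdef]
    exact Prod.ext hz1 hz2
  exact ⟨(Submodule.quotEquivOfEq _ _ hker.symm).trans (f.quotKerEquivOfSurjective hfsurj)⟩
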